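/- Exponential form of the random-coding error bound: under the stated setup with |W'| ≤ 2^u and index set J = {1,…,v}×K×{1,…,m}, the probability that some competitor's product metric reaches the reference metric is at most 2^{−v(T_v − R_c)}, where R_c := u/v and T_v := |K|·m + (1/v) Σ_{l=1}^v Σ_{k∈K} Σ_{i=1}^m log₂( q_{l,k,i}(b*_{l,k,i}) / (q_{l,k,i}(0) + q_{l,k,i}(1)) ). -/
import Mathlib


open MeasureTheory
open scoped ENNReal

/-- Exponential form of the random-coding error bound: with `|W'| ≤ 2^u` and index set
`J = {1,…,v} × K × {1,…,m}`, the probability that some competitor's product metric reaches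
the reference metric is at most `2^{−v(T_v − R_c)}`, where `R_c = u/v` and
`T_v = |K|·m + (1/v) Σ_{l,k,i} log₂(q_{l,k,i}(b*_{l,k,i}) / (q_{l,k,i}(0)+q_{l,k,i}(1)))`. -/
theorem random_coding_exponential_bound
    {Ω : Type*} [MeasureSpace Ω] [IsProbabilityMeasure (volume : Measure Ω)]
    {v m u : ℕ} (hv : 0 < v) (hm : 0 < m) (hu : 0 < u)
    {K : Type*} [Fintype K] [Nonempty K]
    {W' : Type*} [Fintype W'] (hW : Fintype.card W' ≤ 2 ^ u)
    (q : Fin v × K × Fin m → Bool → ℝ)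
    (hq : ∀ j b, 0 ≤ q j b)
    (hqsum : ∀ j, 0 < q j false + q j true)
    (bstar : Fin v × K × Fin m → Bool)
    (hbstar : ∀ j, 0 < q j (bstar j))
    (B : W' → Ω → Fin v × K × Fin m → Bool)
    (hBm : ∀ w', Measurable (B w'))
    (hunif : ∀ (w' : W') (c : Fin v × K × Fin m → Bool),
      volume {ω | B w' ω = c} = 1 / 2 ^ (Fintype.card (Fin v × K × Fin m)))
    (Rc Tv : ℝ)
    (hRc : Rc = (u : ℝ) / v)
    (hTv : Tv = (Fintype.card K : ℝ) * m
        + (1 / (v : ℝ)) * ∑ j : Fin v × K × Fin m,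
            Real.logb 2 (q j (bstar j) / (q j false + q j true))) :
    (volume {ω | ∃ w', (∏ j, q j (bstar j)) ≤ ∏ j, q j (B w' ω j)}).toReal
      ≤ (2 : ℝ) ^ (-(v : ℝ) * (Tv - Rc)) := by
  classical
  set t : ℝ := ∏ j, q j (bstar j) with ht
  set S : ℝ := ∏ j : Fin v × K × Fin m, (q j false + q j true) with hS
  have htpos : 0 < t := Finset.prod_pos (fun j _ => hbstar j)
  have hSpos : 0 < S := Finset.prod_pos (fun j _ => hqsum j)
  set n := Fintype.card (Fin v × K × Fin m) with hn
  set F : Finset (Fin v × K × Fin m → Bool) :=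
    Finset.univ.filter (fun c => t ≤ ∏ j, q j (c j)) with hF
  -- sum-product identity
  have hsum : ∑ c : (Fin v × K × Fin m → Bool), ∏ j, q j (c j) = S := by
    have := (Finset.prod_univ_sum (fun _ : Fin v × K × Fin m => (Finset.univ : Finset Bool))
      (fun j b => q j b)).symm
    rw [Fintype.piFinset_univ] at this
    rw [this, hS]
    refine Finset.prod_congr rfl fun j _ => ?_
    simp [Fintype.sum_bool, add_comm]
  -- cardinality bound
  have hcard : (F.card : ℝ) ≤ S / t := by
    have h1 : (F.card : ℝ) = ∑ _c ∈ F, (1 : ℝ) := by simp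
    rw [h1]
    calc ∑ _c ∈ F, (1 : ℝ) ≤ ∑ c ∈ F, (∏ j, q j (c j)) / t := by
          refine Finset.sum_le_sum fun c hc => ?_
          rw [hF, Finset.mem_filter] at hc
          exact (one_le_div htpos).2 hc.2
      _ ≤ ∑ c : (Fin v × K × Fin m → Bool), (∏ j, q j (c j)) / t := by
          refine Finset.sum_le_sum_of_subset_of_nonneg (Finset.subset_univ _) fun c _ _ => ?_
          exact div_nonneg (Finset.prod_nonneg fun j _ => hq j _) htpos.le
      _ = S / t := by rw [← Finset.sum_div, hsum]
  -- per-codeword union bound in ENNReal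
  have hmeas : volume {ω | ∃ w', t ≤ ∏ j, q j (B w' ω j)}
      ≤ (Fintype.card W' : ℝ≥0∞) * F.card * (1 / 2 ^ n) := by
    have hset : {ω | ∃ w', t ≤ ∏ j, q j (B w' ω j)}
        = ⋃ w' ∈ (Finset.univ : Finset W'), {ω | t ≤ ∏ j, q j (B w' ω j)} := by
      ext ω; simp
    rw [hset]
    refine le_trans (measure_biUnion_finset_le _ _) ?_
    have hw : ∀ w', volume {ω | t ≤ ∏ j, q j (B w' ω j)} ≤ (F.card : ℝ≥0∞) * (1 / 2 ^ n) := by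
      intro w'
      have hset2 : {ω | t ≤ ∏ j, q j (B w' ω j)} = ⋃ c ∈ F, {ω | B w' ω = c} := by
        ext ω
        simp only [Set.mem_setOf_eq, Set.mem_iUnion, hF, Finset.mem_filter, Finset.mem_univ,
          true_and]
        constructor
        · intro h; exact ⟨B w' ω, by simpa using h, rfl⟩
        · rintro ⟨c, hc, hb⟩; rw [hb]; exact hc
      rw [hset2]
      refine le_trans (measure_biUnion_finset_le _ _) (le_of_eq ?_)
      rw [Finset.sum_congr rfl fun c _ => hunif w' c, Finset.sum_const, nsmul_eq_mul]
    calc ∑ w' ∈ Finset.univ, volume {ω | t ≤ ∏ j, q j (B w' ω j)}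
        ≤ ∑ _w' ∈ (Finset.univ : Finset W'), (F.card : ℝ≥0∞) * (1 / 2 ^ n) :=
          Finset.sum_le_sum fun w' _ => hw w'
      _ = (Fintype.card W' : ℝ≥0∞) * F.card * (1 / 2 ^ n) := by
          simp [Finset.card_univ, mul_assoc]
  -- convert to a real bound
  have hreal : (volume {ω | ∃ w', t ≤ ∏ j, q j (B w' ω j)}).toReal
      ≤ (Fintype.card W' : ℝ) * F.card * (1 / 2 ^ n) := by
    have hfin : ((Fintype.card W' : ℝ≥0∞) * F.card * (1 / 2 ^ n)) ≠ ⊤ := by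
      refine ENNReal.mul_ne_top (ENNReal.mul_ne_top ?_ ?_) ?_
      · exact ENNReal.natCast_ne_top _
      · exact ENNReal.natCast_ne_top _
      · rw [one_div]
        exact ENNReal.inv_ne_top.2 (pow_ne_zero _ (by norm_num))
    refine le_trans (ENNReal.toReal_mono hfin hmeas) ?_
    rw [ENNReal.toReal_mul, ENNReal.toReal_mul, ENNReal.toReal_div]
    simp
  -- compute the exponent
  have hv' : (v : ℝ) ≠ 0 := Nat.cast_ne_zero.2 hv.ne'
  have hlog : ∑ j : Fin v × K × Fin m, Real.logb 2 (q j (bstar j) / (q j false + q j true))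
      = Real.logb 2 (t / S) := by
    rw [ht, hS, ← Finset.prod_div_distrib]
    rw [Real.logb_prod]
    intro j _
    exact div_ne_zero (hbstar j).ne' (hqsum j).ne'
  have hnval : (n : ℝ) = (v : ℝ) * ((Fintype.card K : ℝ) * m) := by
    rw [hn]
    push_cast [Fintype.card_prod, Fintype.card_fin]
    ring
  have hexp : -(v : ℝ) * (Tv - Rc) = (u : ℝ) - (n : ℝ) - Real.logb 2 (t / S) := by
    rw [hTv, hRc, hlog, hnval]
    field_simp
    ring
  have hrhs : (2 : ℝ) ^ (-(v : ℝ) * (Tv - Rc)) = (2 : ℝ) ^ u * (1 / 2 ^ n) * (S / t) := by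
    rw [hexp, sub_sub, Real.rpow_sub (by norm_num)]
    rw [Real.rpow_add (by norm_num), Real.rpow_natCast, Real.rpow_natCast]
    rw [Real.rpow_logb (by norm_num) (by norm_num) (div_pos htpos hSpos)]
    have h2n : ((2:ℝ) ^ n) ≠ 0 := by positivity
    field_simp
  -- finish
  rw [hrhs]
  refine le_trans hreal ?_
  have h2n : (0:ℝ) < 2 ^ n := by positivity
  calc (Fintype.card W' : ℝ) * F.card * (1 / 2 ^ n)
      ≤ (2 : ℝ) ^ u * (S / t) * (1 / 2 ^ n) := by
        refine mul_le_mul_of_nonneg_right ?_ (by positivity)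
        refine mul_le_mul ?_ hcard (Nat.cast_nonneg _) (by positivity)
        exact_mod_cast hW
    _ = (2 : ℝ) ^ u * (1 / 2 ^ n) * (S / t) := by ring
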